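/- arXiv:1912.00456 — 2 statements merged into one kernel-verified Lean document; each statement's English description precedes it below -/
import Mathlib

section
/- Let G be a group acting faithfully on a finite set Ω of size n, and suppose Ω = Γ₁ ∪ Γ₂ is a disjoint union of nonempty G-invariant subsets with |Γ₁| = n₁ and |Γ₂| = n₂ (so n₁ + n₂ = n). If a(H) ≤ 2^(m-1) holds for every group H acting faithfully on a set of size m < n, then a(G) ≤ 2^(n₁-1) · 2^(n₂-1) = 2^(n-2). -/
open scoped Pointwise

/-- A composition series of a group `G`: a finite chain of subgroups from `⊥` to `⊤`
in which each term is normal in the next with simple quotient. -/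
structure CompositionSeries' (G : Type*) [Group G] where
  len : ℕ
  s : Fin (len + 1) → Subgroup G
  bot_eq : s 0 = ⊥
  top_eq : s (Fin.last len) = ⊤
  le_succ : ∀ i : Fin len, s i.castSucc ≤ s i.succ
  normal : ∀ i : Fin len, ((s i.castSucc).subgroupOf (s i.succ)).Normal
  simple : ∀ i : Fin len,
    haveI := normal i
    IsSimpleGroup (↥(s i.succ) ⧸ (s i.castSucc).subgroupOf (s i.succ))

/-- The product of the orders of the composition factors of odd order of a
composition series. -/
noncomputable def aProd {G : Type*} [Group G] (c : CompositionSeries' G) : ℕ :=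
  ∏ i : Fin c.len,
    if Odd (Nat.card (↥(c.s i.succ) ⧸ (c.s i.castSucc).subgroupOf (c.s i.succ))) then
      Nat.card (↥(c.s i.succ) ⧸ (c.s i.castSucc).subgroupOf (c.s i.succ))
    else 1

section AProdAux

variable {G : Type*} [Group G]

noncomputable def ofac (A B : Subgroup G) : ℕ :=
  if Odd (Nat.card (↥B ⧸ A.subgroupOf B)) then Nat.card (↥B ⧸ A.subgroupOf B) else 1

theorem aProd_eq_prod_ofac (c : CompositionSeries' G) :
    aProd c = ∏ i : Fin c.len, ofac (c.s i.castSucc) (c.s i.succ) := rfl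

theorem card_quot_eq_one {A B : Subgroup G} (h : A = B) :
    Nat.card (↥B ⧸ A.subgroupOf B) = 1 := by
  subst h
  have : Subsingleton (↥A ⧸ A.subgroupOf A) := by
    rw [Subgroup.subgroupOf_self]; exact QuotientGroup.subsingleton_quotient_top
  exact Nat.card_eq_one_iff_unique.mpr ⟨this, ⟨QuotientGroup.mk 1⟩⟩

theorem ofac_eq_one {A B : Subgroup G} (h : A = B) : ofac A B = 1 := by
  simp [ofac, card_quot_eq_one h]

theorem ofac_eq_of_equiv {H : Type*} [Group H] {A B : Subgroup G} {A' B' : Subgroup H}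
    (e : (↥B ⧸ A.subgroupOf B) ≃ (↥B' ⧸ A'.subgroupOf B')) : ofac A B = ofac A' B' := by
  unfold ofac
  rw [Nat.card_congr e]

theorem isSimpleGroup_of_mulEquiv {M N : Type*} [Group M] [Group N] (e : M ≃* N)
    (h : IsSimpleGroup M) : IsSimpleGroup N := by
  have : Nontrivial M := h.toNontrivial
  have : Nontrivial N := e.symm.toEquiv.nontrivial
  exact IsSimpleGroup.isSimpleGroup_of_surjective e.toMonoidHom e.surjective

theorem val_succAbove {n : ℕ} (p : Fin (n + 1)) (j : Fin n) :
    (p.succAbove j).val = if j.val < p.val then j.val else j.val + 1 := by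
  unfold Fin.succAbove
  split_ifs with h1 h2 h2 <;> simp_all [Fin.lt_def]

theorem disj_congr {A B A' B' : Subgroup G} (hA : A = A') (hB : B = B')
    (h1 : (A.subgroupOf B).Normal) (h2 : (A'.subgroupOf B').Normal)
    (h : A = B ∨ haveI := h1; IsSimpleGroup (↥B ⧸ A.subgroupOf B)) :
    A' = B' ∨ haveI := h2; IsSimpleGroup (↥B' ⧸ A'.subgroupOf B') := by
  subst hA; subst hB; exact h

theorem exists_series (l : ℕ) (t : Fin (l + 1) → Subgroup G)
    (h0 : t 0 = ⊥) (hl : t (Fin.last l) = ⊤)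
    (hle : ∀ i : Fin l, t i.castSucc ≤ t i.succ)
    (hnorm : ∀ i : Fin l, ((t i.castSucc).subgroupOf (t i.succ)).Normal)
    (hsim : ∀ i : Fin l, t i.castSucc = t i.succ ∨
      haveI := hnorm i
      IsSimpleGroup (↥(t i.succ) ⧸ (t i.castSucc).subgroupOf (t i.succ))) :
    ∃ c : CompositionSeries' G, aProd c = ∏ i : Fin l, ofac (t i.castSucc) (t i.succ) := by
  induction l with
  | zero => exact ⟨⟨0, t, h0, hl, fun i => i.elim0, fun i => i.elim0, fun i => i.elim0⟩, rfl⟩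
  | succ l IH =>
    by_cases hex : ∀ i : Fin (l + 1), t i.castSucc ≠ t i.succ
    · exact ⟨⟨l + 1, t, h0, hl, hle, hnorm, fun i => (hsim i).resolve_left (hex i)⟩, rfl⟩
    · push_neg at hex
      obtain ⟨i, hdup⟩ := hex
      have key : ∀ a b : Fin (l + 2), a.val = b.val → t a = t b := fun a b h =>
        congrArg t (Fin.ext h)
      set t' : Fin (l + 1) → Subgroup G := fun j => t (i.succ.succAbove j) with ht'
      have e1 : ∀ j : Fin l, t' j.castSucc = t ((i.succAbove j).castSucc) := by
        intro j
        rcases eq_or_ne j.val i.val with hj | hj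
        · calc t' j.castSucc = t i.castSucc := key _ _ (by
                simp only [val_succAbove, Fin.coe_castSucc, Fin.val_succ]
                split_ifs <;> omega)
          _ = t i.succ := hdup
          _ = t ((i.succAbove j).castSucc) := key _ _ (by
                simp only [val_succAbove, Fin.coe_castSucc, Fin.val_succ]
                split_ifs <;> omega)
        · exact key _ _ (by
            simp only [val_succAbove, Fin.coe_castSucc, Fin.val_succ]
            split_ifs <;> omega)
      have e2 : ∀ j : Fin l, t' j.succ = t ((i.succAbove j).succ) := by
        intro j
        exact key _ _ (by
          simp only [val_succAbove, Fin.coe_castSucc, Fin.val_succ]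
          split_ifs <;> omega)
      have h0' : t' 0 = ⊥ := by
        rw [← h0]
        exact key _ _ (by
          simp only [val_succAbove, Fin.coe_castSucc, Fin.val_succ, Fin.val_zero]
          split_ifs <;> simp)
      have hl' : t' (Fin.last l) = ⊤ := by
        rcases eq_or_ne i.val l with hi | hi
        · calc t' (Fin.last l) = t i.castSucc := key _ _ (by
                simp only [val_succAbove, Fin.coe_castSucc, Fin.val_succ, Fin.val_last]
                split_ifs <;> omega)
          _ = t i.succ := hdup
          _ = t (Fin.last (l + 1)) := key _ _ (by
                simp only [Fin.val_succ, Fin.val_last]; omega)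
          _ = ⊤ := hl
        · rw [← hl]
          exact key _ _ (by
            simp only [val_succAbove, Fin.coe_castSucc, Fin.val_succ, Fin.val_last]
            split_ifs <;> omega)
      have hle' : ∀ j : Fin l, t' j.castSucc ≤ t' j.succ := fun j => by
        rw [e1 j, e2 j]; exact hle (i.succAbove j)
      have hnorm' : ∀ j : Fin l, ((t' j.castSucc).subgroupOf (t' j.succ)).Normal := fun j => by
        rw [e1 j, e2 j]; exact hnorm (i.succAbove j)
      have hsim' : ∀ j : Fin l, t' j.castSucc = t' j.succ ∨
          haveI := hnorm' j
          IsSimpleGroup (↥(t' j.succ) ⧸ (t' j.castSucc).subgroupOf (t' j.succ)) := fun j =>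
        disj_congr (e1 j).symm (e2 j).symm (hnorm (i.succAbove j)) (hnorm' j)
          (hsim (i.succAbove j))
      obtain ⟨c, hc⟩ := IH t' h0' hl' hle' hnorm' hsim'
      refine ⟨c, ?_⟩
      rw [hc, Fin.prod_univ_succAbove (fun k => ofac (t k.castSucc) (t k.succ)) i,
        ofac_eq_one hdup, one_mul]
      exact Finset.prod_congr rfl fun j _ => by rw [e1 j, e2 j]

theorem conj_mem_of_normal {S T : Subgroup G} (hST : S ≤ T)
    (h : (S.subgroupOf T).Normal) {s t : G} (hs : s ∈ S) (ht : t ∈ T) :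
    t * s * t⁻¹ ∈ S :=
  (Subgroup.normal_subgroupOf_iff hST).mp h s t hs ht

theorem inf_normal {S T N : Subgroup G} (hST : S ≤ T) (hS : (S.subgroupOf T).Normal)
    (hN : N.Normal) : ((S ⊓ N).subgroupOf (T ⊓ N)).Normal := by
  rw [Subgroup.normal_subgroupOf_iff (inf_le_inf_right N hST)]
  intro h k hh hk
  exact ⟨conj_mem_of_normal hST hS hh.1 hk.1, hN.conj_mem _ hh.2 _⟩

theorem sup_conj {S T N : Subgroup G} (hST : S ≤ T) (hS : (S.subgroupOf T).Normal)
    (hN : N.Normal) {t g : G} (ht : t ∈ T) (hg : g ∈ S ⊔ N) : t * g * t⁻¹ ∈ S ⊔ N := by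
  have key : S ⊔ N ≤ (S ⊔ N).comap (MulAut.conj t).toMonoidHom := by
    refine sup_le (fun s hs => ?_) (fun n hn => ?_)
    · exact Subgroup.mem_comap.mpr (by
        simpa using Subgroup.mem_sup_left (conj_mem_of_normal hST hS hs ht))
    · exact Subgroup.mem_comap.mpr (by
        simpa using Subgroup.mem_sup_right (hN.conj_mem _ hn _))
  simpa using key hg

theorem sup_le_normalizer {S T N : Subgroup G} (hST : S ≤ T) (hS : (S.subgroupOf T).Normal)
    (hN : N.Normal) : T ⊔ N ≤ Subgroup.normalizer ((S ⊔ N : Subgroup G) : Set G) := by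
  refine sup_le (fun t ht => ?_) (le_trans le_sup_right Subgroup.le_normalizer)
  rw [Subgroup.mem_normalizer_iff]
  intro g
  constructor
  · exact fun hg => sup_conj hST hS hN ht hg
  · intro hg
    have := sup_conj hST hS hN (inv_mem ht) hg
    simpa [mul_assoc] using this

theorem sup_normal {S T N : Subgroup G} (hST : S ≤ T) (hS : (S.subgroupOf T).Normal)
    (hN : N.Normal) : ((S ⊔ N).subgroupOf (T ⊔ N)).Normal := by
  rw [Subgroup.normal_subgroupOf_iff (sup_le_sup_right hST N)]
  intro h k hh hk
  exact (Subgroup.mem_normalizer_iff.mp (sup_le_normalizer hST hS hN hk) h).mp hh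

theorem tower_normal {A B M : Subgroup G} (hAB : A ≤ B) (hBM : B ≤ M)
    (h : (A.subgroupOf B).Normal) :
    ((A.subgroupOf M).subgroupOf (B.subgroupOf M)).Normal := by
  rw [Subgroup.normal_subgroupOf_iff (fun x hx => hAB hx :
    A.subgroupOf M ≤ B.subgroupOf M)]
  intro a b ha hb
  exact conj_mem_of_normal hAB h ha hb

theorem map_normal {Q : Type*} [Group Q] (f : G →* Q) {A B : Subgroup G} (hAB : A ≤ B)
    (h : (A.subgroupOf B).Normal) :
    (((A.map f)).subgroupOf (B.map f)).Normal := by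
  rw [Subgroup.normal_subgroupOf_iff (Subgroup.map_mono hAB)]
  rintro x y ⟨a, ha, rfl⟩ ⟨b, hb, rfl⟩
  exact ⟨b * a * b⁻¹, conj_mem_of_normal hAB h ha hb, by simp⟩

theorem surj_aux {A M T : Subgroup G} (hAT : A ≤ T) (hMT : M ≤ T) (hsup : A ⊔ M = T)
    [h : (A.subgroupOf T).Normal] :
    Function.Surjective ((QuotientGroup.mk' (A.subgroupOf T)).comp (Subgroup.inclusion hMT)) := by
  set φ := (QuotientGroup.mk' (A.subgroupOf T)).comp (Subgroup.inclusion hMT) with hφ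
  set R := φ.range with hR
  have hA_W : A ≤ (R.comap (QuotientGroup.mk' (A.subgroupOf T))).map T.subtype := by
    intro a ha
    refine ⟨⟨a, hAT ha⟩, ?_, rfl⟩
    show QuotientGroup.mk' (A.subgroupOf T) ⟨a, hAT ha⟩ ∈ R
    have h1 : QuotientGroup.mk' (A.subgroupOf T) ⟨a, hAT ha⟩ = 1 :=
      (QuotientGroup.eq_one_iff _).mpr ha
    rw [h1]; exact one_mem R
  have hM_W : M ≤ (R.comap (QuotientGroup.mk' (A.subgroupOf T))).map T.subtype :=
    fun m hm => ⟨⟨m, hMT hm⟩, ⟨⟨m, hm⟩, rfl⟩, rfl⟩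
  have hTW : T ≤ (R.comap (QuotientGroup.mk' (A.subgroupOf T))).map T.subtype := by
    intro x hx
    exact sup_le hA_W hM_W (hsup.symm ▸ hx)
  have hcomap : R.comap (QuotientGroup.mk' (A.subgroupOf T)) = ⊤ := by
    rw [eq_top_iff]
    intro x _
    obtain ⟨y, hy, hval⟩ := hTW x.2
    exact (Subtype.ext hval : y = x) ▸ hy
  have hRtop : R = ⊤ := by
    rw [eq_top_iff]
    intro q _
    obtain ⟨x, rfl⟩ := QuotientGroup.mk'_surjective (A.subgroupOf T) q
    exact hcomap.ge (Subgroup.mem_top x)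
  exact MonoidHom.range_eq_top.mp hRtop

theorem ker_aux {A M T : Subgroup G} (hAT : A ≤ T) (hMT : M ≤ T)
    [h : (A.subgroupOf T).Normal] :
    ((QuotientGroup.mk' (A.subgroupOf T)).comp (Subgroup.inclusion hMT)).ker
      = (A ⊓ M).subgroupOf M := by
  ext x
  rw [MonoidHom.mem_ker, MonoidHom.comp_apply, QuotientGroup.mk'_apply,
    QuotientGroup.eq_one_iff]
  change ((x : G) ∈ A) ↔ _
  rw [Subgroup.mem_subgroupOf, Subgroup.mem_inf]
  exact ⟨fun hx => ⟨hx, x.2⟩, fun hx => hx.1⟩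

noncomputable def quotEquivAux {A M T : Subgroup G} (hAT : A ≤ T) (hMT : M ≤ T)
    (hsup : A ⊔ M = T) [h : (A.subgroupOf T).Normal] [h2 : ((A ⊓ M).subgroupOf M).Normal] :
    (↥M ⧸ (A ⊓ M).subgroupOf M) ≃* (↥T ⧸ A.subgroupOf T) :=
  (QuotientGroup.quotientMulEquivOfEq (ker_aux hAT hMT).symm).trans
    (QuotientGroup.quotientKerEquivOfSurjective _ (surj_aux hAT hMT hsup))

noncomputable def towerQuotEquiv {A B M : Subgroup G} (hAB : A ≤ B) (hBM : B ≤ M)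
    [h1 : (A.subgroupOf B).Normal]
    [h2 : ((A.subgroupOf M).subgroupOf (B.subgroupOf M)).Normal] :
    (↥(B.subgroupOf M) ⧸ (A.subgroupOf M).subgroupOf (B.subgroupOf M))
      ≃* (↥B ⧸ A.subgroupOf B) := by
  let ψ : ↥(B.subgroupOf M) →* ↥B :=
    { toFun := fun x => ⟨x.1.1, x.2⟩
      map_one' := rfl
      map_mul' := fun _ _ => rfl }
  let φ := (QuotientGroup.mk' (A.subgroupOf B)).comp ψ
  have hsurj : Function.Surjective φ := by
    rintro q
    obtain ⟨b, rfl⟩ := QuotientGroup.mk'_surjective (A.subgroupOf B) q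
    exact ⟨⟨⟨b.1, hBM b.2⟩, b.2⟩, rfl⟩
  have hker : φ.ker = (A.subgroupOf M).subgroupOf (B.subgroupOf M) := by
    ext x
    rw [MonoidHom.mem_ker, MonoidHom.comp_apply, QuotientGroup.mk'_apply,
      QuotientGroup.eq_one_iff]
    exact Iff.rfl
  exact (QuotientGroup.quotientMulEquivOfEq hker.symm).trans
    (QuotientGroup.quotientKerEquivOfSurjective φ hsurj)

noncomputable def mapQuotEquiv {Q : Type*} [Group Q] {f : G →* Q}
    (hf : Function.Surjective f) {A B : Subgroup G} (hAB : A ≤ B) (hker : f.ker ≤ A)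
    [h1 : (A.subgroupOf B).Normal] [h2 : ((A.map f).subgroupOf (B.map f)).Normal] :
    (↥B ⧸ A.subgroupOf B) ≃* (↥(B.map f) ⧸ (A.map f).subgroupOf (B.map f)) := by
  let φ := (QuotientGroup.mk' ((A.map f).subgroupOf (B.map f))).comp (f.subgroupMap B)
  have hsurj : Function.Surjective φ :=
    (QuotientGroup.mk'_surjective _).comp (f.subgroupMap_surjective B)
  have hkerφ : φ.ker = A.subgroupOf B := by
    ext x
    rw [MonoidHom.mem_ker, MonoidHom.comp_apply, QuotientGroup.mk'_apply,
      QuotientGroup.eq_one_iff]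
    change (f x.1 ∈ A.map f) ↔ (x.1 ∈ A)
    constructor
    · rintro ⟨a, ha, hfa⟩
      have : a⁻¹ * x.1 ∈ f.ker := by
        rw [MonoidHom.mem_ker, map_mul, map_inv, hfa]
        simp
      have := mul_mem ha (hker this)
      simpa using this
    · intro hx
      exact ⟨x.1, hx, rfl⟩
  exact (QuotientGroup.quotientMulEquivOfEq hkerφ.symm).trans
    (QuotientGroup.quotientKerEquivOfSurjective φ hsurj)

theorem step_split {N S T : Subgroup G} (hN : N.Normal) (hST : S ≤ T)
    (hSnorm : (S.subgroupOf T).Normal)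
    (hsimp : haveI := hSnorm; IsSimpleGroup (↥T ⧸ S.subgroupOf T)) :
    (S ⊓ N = T ⊓ N ∧
      Nonempty (haveI := hSnorm; haveI := sup_normal hST hSnorm hN;
        (↥(T ⊔ N) ⧸ (S ⊔ N).subgroupOf (T ⊔ N)) ≃* (↥T ⧸ S.subgroupOf T)))
    ∨ (S ⊔ N = T ⊔ N ∧
      Nonempty (haveI := hSnorm; haveI := inf_normal hST hSnorm hN;
        (↥(T ⊓ N) ⧸ (S ⊓ N).subgroupOf (T ⊓ N)) ≃* (↥T ⧸ S.subgroupOf T))) := by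
  haveI := hSnorm
  haveI := hN
  by_cases hle : T ⊓ N ≤ S
  · left
    constructor
    · exact le_antisymm (inf_le_inf_right N hST) (le_inf hle inf_le_right)
    · have hST' : (S ⊔ N) ⊓ T = S := by
        apply le_antisymm
        · rintro x hx
          obtain ⟨hx1, hx2⟩ := Subgroup.mem_inf.mp hx
          rw [← SetLike.mem_coe, Subgroup.mul_normal S N] at hx1
          obtain ⟨s, hs, n, hn, rfl⟩ := hx1
          have hnT : n ∈ T := by
            have : s⁻¹ * (s * n) ∈ T := mul_mem (inv_mem (hST hs)) hx2
            simpa using this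
          have hnS : n ∈ S := hle (Subgroup.mem_inf.mpr ⟨hnT, hn⟩)
          exact mul_mem hs hnS
        · exact le_inf le_sup_left hST
      haveI := sup_normal hST hSnorm hN
      haveI h2 : (((S ⊔ N) ⊓ T).subgroupOf T).Normal := by rw [hST']; exact hSnorm
      have e0 := quotEquivAux (T := T ⊔ N) (sup_le_sup_right hST N) le_sup_left
        (by rw [sup_right_comm, sup_eq_right.mpr hST])
      have e1 : (↥T ⧸ S.subgroupOf T) ≃* (↥T ⧸ ((S ⊔ N) ⊓ T).subgroupOf T) :=
        QuotientGroup.quotientMulEquivOfEq (by rw [hST'])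
      exact ⟨(e1.trans e0).symm⟩
  · right
    set J := S ⊔ (T ⊓ N) with hJdef
    have hJT : J ≤ T := sup_le hST inf_le_left
    have hSJ : S ≤ J := le_sup_left
    have hJnorm : (J.subgroupOf T).Normal := by
      rw [Subgroup.normal_subgroupOf_iff hJT]
      intro j t hj ht
      have key : J ≤ J.comap (MulAut.conj t).toMonoidHom := by
        refine sup_le (fun s hs => ?_) (fun x hx => ?_)
        · exact Subgroup.mem_comap.mpr (by
            simpa using hSJ (conj_mem_of_normal hST hSnorm hs ht))
        · have hx' := Subgroup.mem_inf.mp hx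
          refine Subgroup.mem_comap.mpr (by
            simpa using le_sup_right (a := S) (Subgroup.mem_inf.mpr
              ⟨mul_mem (mul_mem ht hx'.1) (inv_mem ht), hN.conj_mem _ hx'.2 _⟩))
      simpa using key hj
    have hJeq : J = T := by
      have hDnorm : ((J.subgroupOf T).map (QuotientGroup.mk' (S.subgroupOf T))).Normal :=
        hJnorm.map _ (QuotientGroup.mk'_surjective _)
      rcases hDnorm.eq_bot_or_eq_top with hD | hD
      · exfalso
        apply hle
        intro x hx
        have hx' := Subgroup.mem_inf.mp hx
        have hxJ : (⟨x, hx'.1⟩ : ↥T) ∈ J.subgroupOf T :=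
          Subgroup.mem_subgroupOf.mpr (le_sup_right (a := S) hx)
        have hmem : QuotientGroup.mk' (S.subgroupOf T) ⟨x, hx'.1⟩ ∈
            (J.subgroupOf T).map (QuotientGroup.mk' (S.subgroupOf T)) :=
          Subgroup.mem_map_of_mem _ hxJ
        rw [hD, Subgroup.mem_bot, QuotientGroup.mk'_apply] at hmem
        exact Subgroup.mem_subgroupOf.mp
          ((QuotientGroup.eq_one_iff (⟨x, hx'.1⟩ : ↥T)).mp hmem)
      · have hUtop : J.subgroupOf T = ⊤ := by
          have h1 := congrArg (Subgroup.comap (QuotientGroup.mk' (S.subgroupOf T))) hD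
          rw [Subgroup.comap_map_eq, Subgroup.comap_top, QuotientGroup.ker_mk'] at h1
          rwa [sup_eq_left.mpr (fun x hx => Subgroup.mem_subgroupOf.mpr (hSJ hx) :
            S.subgroupOf T ≤ J.subgroupOf T)] at h1
        apply le_antisymm hJT
        intro t ht
        have : (⟨t, ht⟩ : ↥T) ∈ J.subgroupOf T := hUtop ▸ Subgroup.mem_top _
        exact this
    constructor
    · refine le_antisymm (sup_le_sup_right hST N) ?_
      refine sup_le ?_ le_sup_right
      rw [← hJeq]
      exact sup_le le_sup_left (inf_le_right.trans le_sup_right)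
    · have hinf : S ⊓ (T ⊓ N) = S ⊓ N := by
        rw [← inf_assoc, inf_eq_left.mpr hST]
      haveI := inf_normal hST hSnorm hN
      haveI h2 : ((S ⊓ (T ⊓ N)).subgroupOf (T ⊓ N)).Normal := by
        rw [hinf]; exact inf_normal hST hSnorm hN
      have e0 := quotEquivAux (T := T) hST inf_le_left hJeq
      have e1 : (↥(T ⊓ N) ⧸ (S ⊓ N).subgroupOf (T ⊓ N))
          ≃* (↥(T ⊓ N) ⧸ (S ⊓ (T ⊓ N)).subgroupOf (T ⊓ N)) :=
        QuotientGroup.quotientMulEquivOfEq (by rw [hinf])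
      exact ⟨e1.trans e0⟩

/-- Per-step data for the intransitive splitting along a normal subgroup `K`. -/
theorem step_all {K S T : Subgroup G} (hK : K.Normal) (hST : S ≤ T)
    (hSn : (S.subgroupOf T).Normal)
    (hsimp : haveI := hSn; IsSimpleGroup (↥T ⧸ S.subgroupOf T)) :
    ((S ⊓ K).subgroupOf K = (T ⊓ K).subgroupOf K ∨
      haveI := tower_normal (inf_le_inf_right K hST) inf_le_right (inf_normal hST hSn hK)
      IsSimpleGroup (↥((T ⊓ K).subgroupOf K) ⧸
        ((S ⊓ K).subgroupOf K).subgroupOf ((T ⊓ K).subgroupOf K))) ∧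
    ((S ⊔ K).map (QuotientGroup.mk' K) = (T ⊔ K).map (QuotientGroup.mk' K) ∨
      haveI := map_normal (QuotientGroup.mk' K) (sup_le_sup_right hST K)
        (sup_normal hST hSn hK)
      IsSimpleGroup (↥((T ⊔ K).map (QuotientGroup.mk' K)) ⧸
        ((S ⊔ K).map (QuotientGroup.mk' K)).subgroupOf ((T ⊔ K).map (QuotientGroup.mk' K)))) ∧
    ofac ((S ⊓ K).subgroupOf K) ((T ⊓ K).subgroupOf K) *
      ofac ((S ⊔ K).map (QuotientGroup.mk' K)) ((T ⊔ K).map (QuotientGroup.mk' K))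
      = ofac S T := by
  haveI := hK
  haveI := hSn
  haveI hm1 : ((S ⊓ K).subgroupOf (T ⊓ K)).Normal := inf_normal hST hSn hK
  haveI hm2 : ((S ⊔ K).subgroupOf (T ⊔ K)).Normal := sup_normal hST hSn hK
  haveI ht1 := tower_normal (inf_le_inf_right K hST) inf_le_right hm1
  haveI ht2 := map_normal (QuotientGroup.mk' K) (sup_le_sup_right hST K) hm2
  have eK := towerQuotEquiv (M := K) (inf_le_inf_right K hST) inf_le_right
    (h1 := hm1) (h2 := ht1)
  have eQ := mapQuotEquiv (QuotientGroup.mk'_surjective K) (sup_le_sup_right hST K)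
    (by rw [QuotientGroup.ker_mk']; exact le_sup_right) (h1 := hm2) (h2 := ht2)
  rcases step_split hK hST hSn hsimp with ⟨hA, ⟨eB⟩⟩ | ⟨hB, ⟨eA⟩⟩
  · refine ⟨Or.inl (by rw [hA]), Or.inr ?_, ?_⟩
    · exact isSimpleGroup_of_mulEquiv ((eB.symm.trans eQ) :
        (↥T ⧸ S.subgroupOf T) ≃* _) hsimp
    · rw [ofac_eq_one (by rw [hA]), one_mul]
      exact ofac_eq_of_equiv (eQ.symm.trans eB).toEquiv
  · refine ⟨Or.inr ?_, Or.inl (by rw [hB]), ?_⟩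
    · exact isSimpleGroup_of_mulEquiv ((eA.symm.trans eK.symm) :
        (↥T ⧸ S.subgroupOf T) ≃* _) hsimp
    · rw [ofac_eq_one (A := (S ⊔ K).map (QuotientGroup.mk' K))
        (B := (T ⊔ K).map (QuotientGroup.mk' K)) (by rw [hB]), mul_one]
      exact ofac_eq_of_equiv (eK.trans eA).toEquiv

end AProdAux

/-- Intransitive reduction step: if `G` acts faithfully on a finite set `Ω` which is a
disjoint union of nonempty `G`-invariant subsets `Γ₁`, `Γ₂` of sizes `n₁`, `n₂`, and if
`a(H) ≤ 2^(m-1)` for every group acting faithfully on a set of size `m < |Ω|`, then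
`a(G) ≤ 2^(n₁-1) · 2^(n₂-1) = 2^(|Ω|-2)`. -/
theorem aProd_le_of_intransitive
    {G : Type u} {Ω : Type v} [Group G] [MulAction G Ω] [FaithfulSMul G Ω] [Fintype Ω]
    (Γ₁ Γ₂ : Set Ω) (hne₁ : Γ₁.Nonempty) (hne₂ : Γ₂.Nonempty)
    (hdisj : Disjoint Γ₁ Γ₂) (hunion : Γ₁ ∪ Γ₂ = Set.univ)
    (hinv₁ : ∀ g : G, g • Γ₁ = Γ₁) (hinv₂ : ∀ g : G, g • Γ₂ = Γ₂)
    {n₁ n₂ : ℕ} (hn₁ : n₁ = Nat.card Γ₁) (hn₂ : n₂ = Nat.card Γ₂)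
    (hind : ∀ (H : Type u) (X : Type v) [Group H] [Fintype X] [MulAction H X],
      FaithfulSMul H X → Fintype.card X < Fintype.card Ω →
      ∀ c : CompositionSeries' H, aProd c ≤ 2 ^ (Fintype.card X - 1)) :
    (∀ c : CompositionSeries' G, aProd c ≤ 2 ^ (n₁ - 1) * 2 ^ (n₂ - 1)) ∧
      2 ^ (n₁ - 1) * 2 ^ (n₂ - 1) = 2 ^ (Fintype.card Ω - 2) := by
  classical
  haveI : Nonempty ↥Γ₁ := hne₁.to_subtype
  haveI : Nonempty ↥Γ₂ := hne₂.to_subtype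
  letI : Fintype ↥Γ₁ := Fintype.ofFinite _
  letI : Fintype ↥Γ₂ := Fintype.ofFinite _
  have hc₁ : Fintype.card ↥Γ₁ = n₁ := by rw [hn₁, Nat.card_eq_fintype_card]
  have hc₂ : Fintype.card ↥Γ₂ = n₂ := by rw [hn₂, Nat.card_eq_fintype_card]
  have hn₁pos : 0 < n₁ := by rw [hn₁]; exact Nat.card_pos
  have hn₂pos : 0 < n₂ := by rw [hn₂]; exact Nat.card_pos
  have hcard : Fintype.card Ω = n₁ + n₂ := by
    rw [hn₁, hn₂, Nat.card_coe_set_eq, Nat.card_coe_set_eq,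
      ← Set.ncard_union_eq hdisj (Set.toFinite _) (Set.toFinite _), hunion, Set.ncard_univ,
      Nat.card_eq_fintype_card]
  have hlt₁ : Fintype.card ↥Γ₁ < Fintype.card Ω := by omega
  have hlt₂ : Fintype.card ↥Γ₂ < Fintype.card Ω := by omega
  refine ⟨?_, by rw [← pow_add]; congr 1; omega⟩
  intro c
  -- the action of G on Γ₁ and Γ₂
  letI act₁ : MulAction G ↥Γ₁ :=
    { smul := fun g x => ⟨g • x.1, by
        have h := Set.smul_mem_smul_set (a := g) x.2
        rwa [hinv₁ g] at h⟩
      one_smul := fun x => Subtype.ext (one_smul G x.1)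
      mul_smul := fun g h x => Subtype.ext (mul_smul g h x.1) }
  letI act₂ : MulAction G ↥Γ₂ :=
    { smul := fun g x => ⟨g • x.1, by
        have h := Set.smul_mem_smul_set (a := g) x.2
        rwa [hinv₂ g] at h⟩
      one_smul := fun x => Subtype.ext (one_smul G x.1)
      mul_smul := fun g h x => Subtype.ext (mul_smul g h x.1) }
  let ρ : G →* Equiv.Perm ↥Γ₁ := MulAction.toPermHom G ↥Γ₁
  let K : Subgroup G := ρ.ker
  haveI hKn : K.Normal := MonoidHom.normal_ker ρ
  have hKfix : ∀ g ∈ K, ∀ x, ∀ hx : x ∈ Γ₁, g • x = x := by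
    intro g hg x hx
    have h1 : ρ g = 1 := hg
    have h2 := congrArg (fun e : Equiv.Perm ↥Γ₁ => (e ⟨x, hx⟩ : Ω)) h1
    exact h2
  letI actK : MulAction ↥K ↥Γ₂ := MulAction.compHom _ K.subtype
  haveI fsK : FaithfulSMul ↥K ↥Γ₂ := by
    constructor
    intro k₁ k₂ h
    apply Subtype.ext
    apply eq_of_smul_eq_smul (M := G) (α := Ω)
    intro x
    rcases (hunion ▸ Set.mem_univ x : x ∈ Γ₁ ∪ Γ₂) with hx | hx
    · rw [hKfix k₁.1 k₁.2 x hx, hKfix k₂.1 k₂.2 x hx]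
    · exact congrArg Subtype.val (h ⟨x, hx⟩)
  let ρbar : G ⧸ K →* Equiv.Perm ↥Γ₁ := QuotientGroup.lift K ρ (fun g hg => hg)
  letI actQ : MulAction (G ⧸ K) ↥Γ₁ := MulAction.compHom _ ρbar
  haveI fsQ : FaithfulSMul (G ⧸ K) ↥Γ₁ := by
    have hinj : Function.Injective ρbar := by
      rw [← MonoidHom.ker_eq_bot_iff, eq_bot_iff]
      intro q hq
      obtain ⟨g, rfl⟩ := QuotientGroup.mk'_surjective K q
      have hg : g ∈ K := hq
      exact Subgroup.mem_bot.mpr ((QuotientGroup.eq_one_iff g).mpr hg)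
    constructor
    intro q₁ q₂ h
    exact hinj (Equiv.ext fun x => h x)
  -- the two chains
  let tK : Fin (c.len + 1) → Subgroup ↥K := fun i => (c.s i ⊓ K).subgroupOf K
  let tQ : Fin (c.len + 1) → Subgroup (G ⧸ K) := fun i => (c.s i ⊔ K).map (QuotientGroup.mk' K)
  have step := fun i : Fin c.len =>
    step_all (K := K) hKn (c.le_succ i) (c.normal i) (c.simple i)
  obtain ⟨cK, hcK⟩ := exists_series c.len tK
    (by show (c.s 0 ⊓ K).subgroupOf K = ⊥
        rw [c.bot_eq, bot_inf_eq, Subgroup.bot_subgroupOf])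
    (by show (c.s (Fin.last c.len) ⊓ K).subgroupOf K = ⊤
        rw [c.top_eq, top_inf_eq, Subgroup.subgroupOf_self])
    (fun i x hx => inf_le_inf_right K (c.le_succ i) hx)
    (fun i => tower_normal (inf_le_inf_right K (c.le_succ i)) inf_le_right
      (inf_normal (c.le_succ i) (c.normal i) hKn))
    (fun i => (step i).1)
  obtain ⟨cQ, hcQ⟩ := exists_series c.len tQ
    (by show (c.s 0 ⊔ K).map (QuotientGroup.mk' K) = ⊥
        rw [c.bot_eq, bot_sup_eq]
        refine le_antisymm ?_ bot_le
        rintro q ⟨k, hk, rfl⟩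
        exact Subgroup.mem_bot.mpr ((QuotientGroup.eq_one_iff k).mpr hk))
    (by show (c.s (Fin.last c.len) ⊔ K).map (QuotientGroup.mk' K) = ⊤
        rw [c.top_eq, top_sup_eq, ← MonoidHom.range_eq_map, MonoidHom.range_eq_top]
        exact QuotientGroup.mk'_surjective K)
    (fun i => Subgroup.map_mono (sup_le_sup_right (c.le_succ i) K))
    (fun i => map_normal _ (sup_le_sup_right (c.le_succ i) K)
      (sup_normal (c.le_succ i) (c.normal i) hKn))
    (fun i => (step i).2.1)
  have hprod : aProd c = aProd cK * aProd cQ := by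
    rw [aProd_eq_prod_ofac, hcK, hcQ, ← Finset.prod_mul_distrib]
    exact Finset.prod_congr rfl fun i _ => ((step i).2.2).symm
  have hK2 := hind ↥K ↥Γ₂ fsK hlt₂ cK
  have hQ1 := hind (G ⧸ K) ↥Γ₁ fsQ hlt₁ cQ
  rw [hprod]
  calc aProd cK * aProd cQ ≤ 2 ^ (n₂ - 1) * 2 ^ (n₁ - 1) :=
        Nat.mul_le_mul (hc₂ ▸ hK2) (hc₁ ▸ hQ1)
    _ = 2 ^ (n₁ - 1) * 2 ^ (n₂ - 1) := Nat.mul_comm _ _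
end

section
/- Let G be a group acting faithfully and transitively but imprimitively on a finite set Ω of size n, with a nontrivial system of blocks Ω = Ω₁ ∪ … ∪ Ω_r where each block has size m and n = mr, with 1 < m < n. Let K be the kernel of the induced action of G on the set of blocks. If a(H) ≤ 2^(k-1) for every group H acting faithfully on a set of size k < n, then a(G) = a(G/K) · ∏_{i=1}^{r} a(K_{i-1}/K_i) ≤ 2^(r-1) · (2^(m-1))^r ≤ 2^(n-1), where K₀ = K and K_{i+1} = {g ∈ K_i : g acts trivially on Ω_{i+1}}. -/
open scoped Pointwise

namespace AProdJHL

variable {G : Type*} [Group G]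

/-- `A` is a maximal "normal-in" subgroup of `B`: `A ≤ B`, `A ≠ B`, `A` is normal in `B`
and the quotient is simple. -/
def GMax (A B : Subgroup G) : Prop :=
  A ≤ B ∧ A ≠ B ∧ ∃ h : (A.subgroupOf B).Normal,
    letI := h; IsSimpleGroup (↥B ⧸ A.subgroupOf B)

/-- Isomorphism of pairs: the coset spaces are equinumerous (as plain types). -/
def GIso (p q : Subgroup G × Subgroup G) : Prop :=
  Nonempty ((↥p.2 ⧸ p.1.subgroupOf p.2) ≃ (↥q.2 ⧸ q.1.subgroupOf q.2))

lemma isSimpleGroup_of_mulEquiv {A B : Type*} [Group A] [Group B] (e : A ≃* B)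
    (h : IsSimpleGroup A) : IsSimpleGroup B := by
  haveI := h
  haveI : Nontrivial B := e.toEquiv.symm.nontrivial
  exact IsSimpleGroup.isSimpleGroup_of_surjective e.toMonoidHom e.surjective

lemma subgroupOf_inj {A B C : Subgroup G} (hA : A ≤ C) (hB : B ≤ C) :
    A.subgroupOf C = B.subgroupOf C ↔ A = B := by
  constructor
  · intro h
    have := congrArg (Subgroup.map C.subtype) h
    rwa [Subgroup.subgroupOf_map_subtype, Subgroup.subgroupOf_map_subtype,
      inf_eq_left.mpr hA, inf_eq_left.mpr hB] at this
  · rintro rfl; rfl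

lemma map_subtype_top (C : Subgroup G) : Subgroup.map C.subtype ⊤ = C := by
  rw [← MonoidHom.range_eq_map, Subgroup.range_subtype]

lemma subgroupOf_sup_of_le {A B C : Subgroup G} (hA : A ≤ C) (hB : B ≤ C)
    (h : A.subgroupOf C ⊔ B.subgroupOf C = ⊤) : A ⊔ B = C := by
  have := congrArg (Subgroup.map C.subtype) h
  rwa [Subgroup.map_sup, Subgroup.subgroupOf_map_subtype, Subgroup.subgroupOf_map_subtype,
    inf_eq_left.mpr hA, inf_eq_left.mpr hB, map_subtype_top] at this

/-- relative sup is everything -/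
lemma subgroupOf_sup_eq_top {A B C : Subgroup G} (hA : A ≤ C) (hB : B ≤ C)
    (h : A ⊔ B = C) : A.subgroupOf C ⊔ B.subgroupOf C = ⊤ := by
  apply Subgroup.map_injective C.subtype_injective
  rw [Subgroup.map_sup, Subgroup.subgroupOf_map_subtype, Subgroup.subgroupOf_map_subtype,
    inf_eq_left.mpr hA, inf_eq_left.mpr hB, map_subtype_top, h]

end AProdJHL

section Workhorse

variable {P H : Type*} [Group P] [Group H]

open QuotientGroup AProdJHL

/-- Workhorse: transfer a relative quotient along a surjection onto `↥Y`. -/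
lemma quot_transfer {U V : Subgroup P} {X Y : Subgroup H} (hXY : X ≤ Y)
    [hn : (X.subgroupOf Y).Normal]
    (φ : ↥V →* ↥Y) (hφ : Function.Surjective φ)
    (hU : ∀ v : ↥V, v ∈ U.subgroupOf V ↔ ((φ v : ↥Y) : H) ∈ X) :
    ∃ _ : (U.subgroupOf V).Normal,
      Nonempty ((↥V ⧸ U.subgroupOf V) ≃* (↥Y ⧸ X.subgroupOf Y)) := by
  let ψ : ↥V →* ↥Y ⧸ X.subgroupOf Y := (QuotientGroup.mk' (X.subgroupOf Y)).comp φ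
  have hker : ψ.ker = U.subgroupOf V := by
    ext v
    rw [MonoidHom.mem_ker]
    show (QuotientGroup.mk' (X.subgroupOf Y)) (φ v) = 1 ↔ _
    rw [← MonoidHom.mem_ker, QuotientGroup.ker_mk', Subgroup.mem_subgroupOf]
    exact (hU v).symm
  haveI hnor : (U.subgroupOf V).Normal := hker ▸ ψ.normal_ker
  refine ⟨hnor, ⟨(QuotientGroup.quotientMulEquivOfEq hker.symm).trans
    (QuotientGroup.quotientKerEquivOfSurjective ψ ?_)⟩⟩
  exact (QuotientGroup.mk'_surjective _).comp hφ

end Workhorse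

namespace AProdJHL

variable {G : Type*} [Group G]

open Subgroup QuotientGroup

lemma GMax.lt {A B : Subgroup G} (h : GMax A B) : A < B := lt_of_le_of_ne h.1 h.2.1

/-- key step for sup axiom -/
lemma gmax_sup_eq {x y z : Subgroup G} (hx : GMax x z) (hy : GMax y z) (hxy : x ≠ y) :
    x ⊔ y = z := by
  obtain ⟨hxz, -, nX, sX⟩ := hx
  obtain ⟨hyz, -, nY, sY⟩ := hy
  haveI := nX; haveI := nY; haveI := sX; haveI := sY
  set X := x.subgroupOf z with hXdef
  set Y := y.subgroupOf z with hYdef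
  have hXY : X ≠ Y := fun h => hxy ((subgroupOf_inj hxz hyz).mp h)
  apply subgroupOf_sup_of_le hxz hyz
  -- show X ⊔ Y = ⊤
  -- consider image of Y in z/X
  have h1 : (Subgroup.map (QuotientGroup.mk' X) Y).Normal :=
    nY.map _ (QuotientGroup.mk'_surjective X)
  rcases h1.eq_bot_or_eq_top with h1 | h1
  · -- Y ≤ X
    have hYX : Y ≤ X := by
      rw [Subgroup.map_eq_bot_iff, QuotientGroup.ker_mk'] at h1; exact h1
    have h2 : (Subgroup.map (QuotientGroup.mk' Y) X).Normal :=
      nX.map _ (QuotientGroup.mk'_surjective Y)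
    rcases h2.eq_bot_or_eq_top with h2 | h2
    · exfalso
      rw [Subgroup.map_eq_bot_iff, QuotientGroup.ker_mk'] at h2
      exact hXY (le_antisymm h2 hYX)
    · have := congrArg (Subgroup.comap (QuotientGroup.mk' Y)) h2
      rwa [Subgroup.comap_map_eq, QuotientGroup.ker_mk', Subgroup.comap_top] at this
  · have := congrArg (Subgroup.comap (QuotientGroup.mk' X)) h1
    rw [Subgroup.comap_map_eq, QuotientGroup.ker_mk', Subgroup.comap_top] at this
    rw [sup_comm]; exact this

end AProdJHL

namespace AProdJHL

variable {G : Type*} [Group G]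

open Subgroup QuotientGroup

/-- The canonical map `↥y →* ↥(x ⊔ y) ⧸ x.subgroupOf (x ⊔ y)` (with `x` normal there)
is surjective with kernel `(x ⊓ y).subgroupOf y`, provided the image of `y` is everything.
We prove the two cases we need. -/
lemma aux_hom_ker {x y : Subgroup G} (h : x ≤ y) : True := trivial

section secondIso

variable {x y : Subgroup G} (nX : (x.subgroupOf (x ⊔ y)).Normal)

/-- second isomorphism data: `↥y ⧸ (x⊓y).subgroupOf y ≃* ↥(x⊔y) ⧸ x.subgroupOf (x⊔y)`,
plus normality of `(x⊓y).subgroupOf y`. -/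
lemma second_iso_data :
    ∃ _ : ((x ⊓ y).subgroupOf y).Normal,
      Nonempty ((↥y ⧸ (x ⊓ y).subgroupOf y) ≃* (↥(x ⊔ y) ⧸ x.subgroupOf (x ⊔ y))) := by
  haveI := nX
  set C := x ⊔ y with hC
  let ψ0 : ↥y →* ↥C := Subgroup.inclusion le_sup_right
  let ψ : ↥y →* ↥C ⧸ x.subgroupOf C := (QuotientGroup.mk' (x.subgroupOf C)).comp ψ0
  have hker : ψ.ker = (x ⊓ y).subgroupOf y := by
    ext v
    rw [MonoidHom.mem_ker]
    show ((ψ0 v : ↥C) : (↥C ⧸ x.subgroupOf C)) = 1 ↔ _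
    rw [QuotientGroup.eq_one_iff, Subgroup.mem_subgroupOf, Subgroup.mem_subgroupOf,
      Subgroup.mem_inf]
    show (v : G) ∈ x ↔ _
    simp [v.2]
  have hsurj : Function.Surjective ψ := by
    rw [← MonoidHom.range_eq_top]
    have hr : ψ.range = Subgroup.map (QuotientGroup.mk' (x.subgroupOf C)) (y.subgroupOf C) := by
      rw [MonoidHom.range_comp, Subgroup.inclusion_range]
    apply Subgroup.comap_injective (QuotientGroup.mk'_surjective (x.subgroupOf C))
    rw [hr, Subgroup.comap_map_eq, QuotientGroup.ker_mk', Subgroup.comap_top, sup_comm]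
    exact subgroupOf_sup_eq_top le_sup_left le_sup_right rfl
  haveI hnor : ((x ⊓ y).subgroupOf y).Normal := hker ▸ ψ.normal_ker
  exact ⟨hnor, ⟨(QuotientGroup.quotientMulEquivOfEq hker.symm).trans
    (QuotientGroup.quotientKerEquivOfSurjective ψ hsurj)⟩⟩

end secondIso

lemma quotient_nontrivial {A B : Subgroup G} (hn : (A.subgroupOf B).Normal)
    (hs : letI := hn; IsSimpleGroup (↥B ⧸ A.subgroupOf B)) : A ≠ B := by
  rintro rfl
  haveI := hn; haveI := hs
  haveI : Subsingleton (↥A ⧸ A.subgroupOf A) := by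
    constructor
    intro a b
    induction a using QuotientGroup.induction_on
    induction b using QuotientGroup.induction_on
    rw [QuotientGroup.eq]
    rw [Subgroup.subgroupOf_self]
    trivial
  exact false_of_nontrivial_of_subsingleton (↥A ⧸ A.subgroupOf A)

instance instJHL : JordanHolderLattice (Subgroup G) where
  IsMaximal := GMax
  lt_of_isMaximal h := h.lt
  sup_eq_of_isMaximal := gmax_sup_eq
  isMaximal_inf_left_of_isMaximal_sup {x y} hx hy := by
    obtain ⟨hxC, hxne, nX, sX⟩ := hx
    obtain ⟨hyC, hyne, nY, sY⟩ := hy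
    haveI := nX; haveI := nY; haveI := sX; haveI := sY
    have hnxy : ¬ x ≤ y := fun h => hyne (by rw [sup_eq_right.mpr h])
    -- hom from x to (x ⊔ y) / y
    let ψ0 : ↥x →* ↥(x ⊔ y) := Subgroup.inclusion le_sup_left
    let ψ : ↥x →* ↥(x ⊔ y) ⧸ y.subgroupOf (x ⊔ y) :=
      (QuotientGroup.mk' (y.subgroupOf (x ⊔ y))).comp ψ0
    have hker : ψ.ker = (x ⊓ y).subgroupOf x := by
      ext v
      rw [MonoidHom.mem_ker]
      show ((ψ0 v : ↥(x ⊔ y)) : (↥(x ⊔ y) ⧸ y.subgroupOf (x ⊔ y))) = 1 ↔ _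
      rw [QuotientGroup.eq_one_iff, Subgroup.mem_subgroupOf, Subgroup.mem_subgroupOf,
        Subgroup.mem_inf]
      show (v : G) ∈ y ↔ _
      simp [v.2]
    have hsurj : Function.Surjective ψ := by
      rw [← MonoidHom.range_eq_top]
      have hr : ψ.range = Subgroup.map (QuotientGroup.mk' (y.subgroupOf (x ⊔ y)))
          (x.subgroupOf (x ⊔ y)) := by
        rw [MonoidHom.range_comp, Subgroup.inclusion_range]
      have h1 : (Subgroup.map (QuotientGroup.mk' (y.subgroupOf (x ⊔ y)))
          (x.subgroupOf (x ⊔ y))).Normal := nX.map _ (QuotientGroup.mk'_surjective _)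
      rcases h1.eq_bot_or_eq_top with h1 | h1
      · exfalso
        rw [Subgroup.map_eq_bot_iff, QuotientGroup.ker_mk'] at h1
        exact hnxy (by
          intro g hg
          have hxle : x ≤ x ⊔ y := le_sup_left
          have := h1 (by rwa [Subgroup.mem_subgroupOf] : (⟨g, hxle hg⟩ : ↥(x ⊔ y)) ∈ x.subgroupOf (x ⊔ y))
          rwa [Subgroup.mem_subgroupOf] at this)
      · rw [hr, h1]
    haveI hnor : ((x ⊓ y).subgroupOf x).Normal := hker ▸ ψ.normal_ker
    have e : (↥x ⧸ (x ⊓ y).subgroupOf x) ≃* (↥(x ⊔ y) ⧸ y.subgroupOf (x ⊔ y)) :=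
      (QuotientGroup.quotientMulEquivOfEq hker.symm).trans
        (QuotientGroup.quotientKerEquivOfSurjective ψ hsurj)
    refine ⟨inf_le_left, fun h => hnxy (h ▸ inf_le_right), hnor, ?_⟩
    exact isSimpleGroup_of_mulEquiv e.symm sY

lemma giso_of_iso {p q : Subgroup G × Subgroup G} (h : JordanHolderLattice.Iso p q) :
    GIso p q :=
  JordanHolderLattice.Iso.rel GIso ⟨Equiv.refl _⟩ (fun h => h.elim fun e => ⟨e.symm⟩)
    (fun h1 h2 => h1.elim fun e1 => h2.elim fun e2 => ⟨e1.trans e2⟩)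
    (fun {x y} h => by
      obtain ⟨hle, hne, nX, sX⟩ := h
      obtain ⟨hnor, ⟨e⟩⟩ := second_iso_data (x := x) (y := y) nX
      exact ⟨e.symm.toEquiv⟩) h

end AProdJHL

namespace AProdJHL

variable {G : Type*} [Group G]

/-- odd part helper -/
noncomputable def oddFactor (p : Subgroup G × Subgroup G) : ℕ :=
  if Odd (Nat.card (↥p.2 ⧸ p.1.subgroupOf p.2)) then
    Nat.card (↥p.2 ⧸ p.1.subgroupOf p.2) else 1

lemma oddFactor_eq_of_giso {p q : Subgroup G × Subgroup G} (h : GIso p q) :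
    oddFactor p = oddFactor q := by
  obtain ⟨e⟩ := h
  unfold oddFactor
  rw [Nat.card_congr e]

/-- the product of odd composition factor orders along a `CompositionSeries (Subgroup G)` -/
noncomputable def aProdCS (c : CompositionSeries (Subgroup G)) : ℕ :=
  ∏ i : Fin c.length, oddFactor (c i.castSucc, c i.succ)

lemma aProdCS_eq_of_equivalent {c d : CompositionSeries (Subgroup G)}
    (h : c.Equivalent d) : aProdCS c = aProdCS d := by
  obtain ⟨e, he⟩ := h
  calc aProdCS c = ∏ i : Fin c.length, oddFactor (d (e i).castSucc, d (e i).succ) :=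
        Finset.prod_congr rfl fun i _ => oddFactor_eq_of_giso (giso_of_iso (he i))
    _ = aProdCS d := Equiv.prod_comp e fun j => oddFactor (d j.castSucc, d j.succ)

lemma aProdCS_smash {c d : CompositionSeries (Subgroup G)} (h : c.last = d.head) :
    aProdCS (RelSeries.smash c d h) = aProdCS c * aProdCS d := by
  have h0 : aProdCS (RelSeries.smash c d h) = ∏ i : Fin (c.length + d.length),
      oddFactor ((RelSeries.smash c d h) i.castSucc, (RelSeries.smash c d h) i.succ) := rfl
  rw [show aProdCS c = ∏ i : Fin c.length, oddFactor (c i.castSucc, c i.succ) from rfl,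
    show aProdCS d = ∏ i : Fin d.length, oddFactor (d i.castSucc, d i.succ) from rfl,
    h0, Fin.prod_univ_add]
  congr 1
  · apply Finset.prod_congr rfl
    intro i _
    rw [RelSeries.smash_castAdd h i, RelSeries.smash_succ_castAdd h i]
  · apply Finset.prod_congr rfl
    intro i _
    rw [RelSeries.smash_natAdd h i, RelSeries.smash_succ_natAdd h i]

end AProdJHL


namespace AProdJHL

variable {G : Type*} [Group G]

/-- convert the custom structure into a mathlib `CompositionSeries` over `Subgroup G`. -/
def toCS (c : CompositionSeries' G) : CompositionSeries (Subgroup G) where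
  length := c.len
  toFun := c.s
  step i := ⟨c.le_succ i, quotient_nontrivial (c.normal i) (c.simple i), c.normal i, c.simple i⟩

lemma aProd_eq_toCS (c : CompositionSeries' G) : aProd c = aProdCS (toCS c) := rfl

lemma toCS_head (c : CompositionSeries' G) : (toCS c).head = c.s 0 := rfl
lemma toCS_last (c : CompositionSeries' G) : (toCS c).last = c.s (Fin.last c.len) := rfl

section Lift

variable (B A : Subgroup G) [nAB : (A.subgroupOf B).Normal]

/-- lift of a subgroup of `↥B ⧸ A.subgroupOf B` to a subgroup of `G` between `A` and `B`. -/
def segLift (S : Subgroup (↥B ⧸ A.subgroupOf B)) : Subgroup G :=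
  Subgroup.map B.subtype (Subgroup.comap (QuotientGroup.mk' (A.subgroupOf B)) S)

lemma segLift_mono {S T : Subgroup (↥B ⧸ A.subgroupOf B)} (h : S ≤ T) :
    segLift B A S ≤ segLift B A T :=
  Subgroup.map_mono (Subgroup.comap_mono h)

lemma segLift_injective : Function.Injective (segLift B A) := fun S T h => by
  have := Subgroup.map_injective B.subtype_injective h
  exact Subgroup.comap_injective (QuotientGroup.mk'_surjective _) this

lemma segLift_bot (hAB : A ≤ B) : segLift B A ⊥ = A := by
  unfold segLift
  rw [MonoidHom.comap_bot, QuotientGroup.ker_mk', Subgroup.subgroupOf_map_subtype,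
    inf_eq_left.mpr hAB]

lemma segLift_top : segLift B A ⊤ = B := by
  unfold segLift
  rw [Subgroup.comap_top, map_subtype_top]

end Lift

end AProdJHL

namespace AProdJHL

variable {G : Type*} [Group G]

section Lift2

variable (B A : Subgroup G) [nAB : (A.subgroupOf B).Normal]

local notation "π" => QuotientGroup.mk' (A.subgroupOf B)

lemma segLift_le (S : Subgroup (↥B ⧸ A.subgroupOf B)) : segLift B A S ≤ B :=
  Subgroup.map_subtype_le _

/-- The canonical surjection `↥(segLift B A Y) →* ↥Y` -/
noncomputable def segHom (Y : Subgroup (↥B ⧸ A.subgroupOf B)) :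
    ↥(segLift B A Y) →* ↥Y := by
  refine MonoidHom.codRestrict
    ((QuotientGroup.mk' (A.subgroupOf B)).comp (Subgroup.inclusion (segLift_le B A Y))) Y ?_
  intro v
  obtain ⟨b, hb, hbv⟩ := v.2
  have : Subgroup.inclusion (segLift_le B A Y) v = b := Subtype.ext hbv.symm
  show (QuotientGroup.mk' (A.subgroupOf B)) (Subgroup.inclusion (segLift_le B A Y) v) ∈ Y
  rw [this]
  exact hb

lemma segHom_coe (Y : Subgroup (↥B ⧸ A.subgroupOf B)) (v : ↥(segLift B A Y)) :
    (segHom B A Y v : ↥B ⧸ A.subgroupOf B)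
      = (QuotientGroup.mk' (A.subgroupOf B)) (Subgroup.inclusion (segLift_le B A Y) v) := rfl

lemma segHom_surjective (Y : Subgroup (↥B ⧸ A.subgroupOf B)) :
    Function.Surjective (segHom B A Y) := by
  rintro ⟨y, hy⟩
  obtain ⟨b, hb⟩ := QuotientGroup.mk'_surjective (A.subgroupOf B) y
  have hbY : b ∈ Subgroup.comap (QuotientGroup.mk' (A.subgroupOf B)) Y := by
    rw [Subgroup.mem_comap, hb]; exact hy
  have hmem : (b : G) ∈ segLift B A Y := ⟨b, hbY, rfl⟩
  refine ⟨⟨(b : G), hmem⟩, ?_⟩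
  apply Subtype.ext
  rw [segHom_coe]
  have : Subgroup.inclusion (segLift_le B A Y) ⟨(b : G), hmem⟩ = b := Subtype.ext rfl
  rw [this, hb]

lemma segHom_mem_iff {X Y : Subgroup (↥B ⧸ A.subgroupOf B)} (v : ↥(segLift B A Y)) :
    v ∈ (segLift B A X).subgroupOf (segLift B A Y) ↔
      ((segHom B A Y v : ↥Y) : ↥B ⧸ A.subgroupOf B) ∈ X := by
  rw [Subgroup.mem_subgroupOf, segHom_coe]
  constructor
  · rintro ⟨b, hb, hbv⟩
    have : Subgroup.inclusion (segLift_le B A Y) v = b := Subtype.ext hbv.symm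
    rw [this]
    exact hb
  · intro h
    exact ⟨Subgroup.inclusion (segLift_le B A Y) v, h, rfl⟩

/-- main transfer: `GMax` and the factor equivalence pass through `segLift`. -/
lemma segLift_gmax {X Y : Subgroup (↥B ⧸ A.subgroupOf B)} (hXY : X ≤ Y) (hne : X ≠ Y)
    (hn : (X.subgroupOf Y).Normal)
    (hs : letI := hn; IsSimpleGroup (↥Y ⧸ X.subgroupOf Y)) :
    GMax (segLift B A X) (segLift B A Y) ∧
      Nonempty ((↥(segLift B A Y) ⧸ (segLift B A X).subgroupOf (segLift B A Y))
        ≃ (↥Y ⧸ X.subgroupOf Y)) := by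
  haveI := hn
  obtain ⟨hnor, ⟨e⟩⟩ := quot_transfer (U := segLift B A X) hXY (segHom B A Y)
    (segHom_surjective B A Y) (fun v => segHom_mem_iff B A v)
  refine ⟨⟨segLift_mono B A hXY, fun h => hne (segLift_injective B A h), hnor,
    isSimpleGroup_of_mulEquiv e.symm hs⟩, ⟨e.toEquiv⟩⟩

end Lift2

end AProdJHL

namespace AProdJHL

variable {G : Type*} [Group G]

/-! ### lifted composition series -/

section SegSeries

variable (B A : Subgroup G) (hAB : A ≤ B) [nAB : (A.subgroupOf B).Normal]

/-- lift a composition series of `↥B ⧸ A.subgroupOf B` to a composition series of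
subgroups of `G` running from `A` to `B`. -/
noncomputable def segSeries (c : CompositionSeries' (↥B ⧸ A.subgroupOf B)) :
    CompositionSeries (Subgroup G) where
  length := c.len
  toFun i := segLift B A (c.s i)
  step i := (segLift_gmax B A (c.le_succ i)
    (quotient_nontrivial (c.normal i) (c.simple i)) (c.normal i) (c.simple i)).1

lemma segSeries_head (hAB : A ≤ B) (c : CompositionSeries' (↥B ⧸ A.subgroupOf B)) :
    (segSeries B A c).head = A := by
  show segLift B A (c.s 0) = A
  rw [c.bot_eq, segLift_bot B A hAB]

lemma segSeries_last (c : CompositionSeries' (↥B ⧸ A.subgroupOf B)) :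
    (segSeries B A c).last = B := by
  show segLift B A (c.s (Fin.last c.len)) = B
  rw [c.top_eq, segLift_top]

lemma aProdCS_segSeries (c : CompositionSeries' (↥B ⧸ A.subgroupOf B)) :
    aProdCS (segSeries B A c) = aProd c := by
  unfold aProdCS aProd
  apply Finset.prod_congr rfl
  intro i _
  haveI := c.normal i
  obtain ⟨-, ⟨e⟩⟩ := segLift_gmax B A (c.le_succ i)
    (quotient_nontrivial (c.normal i) (c.simple i)) (c.normal i) (c.simple i)
  show oddFactor (segLift B A (c.s i.castSucc), segLift B A (c.s i.succ)) = _
  unfold oddFactor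
  exact congrArg (fun n => if Odd n then n else 1) (Nat.card_congr e)

end SegSeries

section TopSeries

variable (N : Subgroup G) [nN : N.Normal]

/-- lift a composition series of `G ⧸ N` to a composition series of
subgroups of `G` running from `N` to `⊤`. -/
noncomputable def topSeries (c : CompositionSeries' (G ⧸ N)) :
    CompositionSeries (Subgroup G) where
  length := c.len
  toFun i := Subgroup.comap (QuotientGroup.mk' N) (c.s i)
  step i := by
    haveI := c.normal i
    have hsub : ∀ (v : ↥(Subgroup.comap (QuotientGroup.mk' N) (c.s i.succ))),
        v ∈ (Subgroup.comap (QuotientGroup.mk' N) (c.s i.castSucc)).subgroupOf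
          (Subgroup.comap (QuotientGroup.mk' N) (c.s i.succ)) ↔
        ((MonoidHom.codRestrict ((QuotientGroup.mk' N).comp
          (Subgroup.comap (QuotientGroup.mk' N) (c.s i.succ)).subtype) (c.s i.succ)
          (fun x => x.2) v : ↥(c.s i.succ)) : G ⧸ N) ∈ c.s i.castSucc := fun v => by
      rw [Subgroup.mem_subgroupOf, Subgroup.mem_comap]; rfl
    have hsurj : Function.Surjective (MonoidHom.codRestrict ((QuotientGroup.mk' N).comp
        (Subgroup.comap (QuotientGroup.mk' N) (c.s i.succ)).subtype) (c.s i.succ)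
        (fun x => x.2)) := by
      rintro ⟨y, hy⟩
      obtain ⟨g, hg⟩ := QuotientGroup.mk'_surjective N y
      exact ⟨⟨g, by rw [Subgroup.mem_comap, hg]; exact hy⟩, Subtype.ext hg⟩
    obtain ⟨hnor, ⟨e⟩⟩ := quot_transfer (c.le_succ i) _ hsurj hsub
    refine ⟨Subgroup.comap_mono (c.le_succ i), ?_, hnor, isSimpleGroup_of_mulEquiv e.symm (c.simple i)⟩
    intro h
    exact quotient_nontrivial (c.normal i) (c.simple i)
      (Subgroup.comap_injective (QuotientGroup.mk'_surjective N) h)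

lemma topSeries_head (c : CompositionSeries' (G ⧸ N)) : (topSeries N c).head = N := by
  show Subgroup.comap (QuotientGroup.mk' N) (c.s 0) = N
  rw [c.bot_eq, MonoidHom.comap_bot, QuotientGroup.ker_mk']

lemma topSeries_last (c : CompositionSeries' (G ⧸ N)) : (topSeries N c).last = ⊤ := by
  show Subgroup.comap (QuotientGroup.mk' N) (c.s (Fin.last c.len)) = ⊤
  rw [c.top_eq, Subgroup.comap_top]

lemma aProdCS_topSeries (c : CompositionSeries' (G ⧸ N)) :
    aProdCS (topSeries N c) = aProd c := by
  unfold aProdCS aProd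
  apply Finset.prod_congr rfl
  intro i _
  haveI := c.normal i
  have hsurj : Function.Surjective (MonoidHom.codRestrict ((QuotientGroup.mk' N).comp
      (Subgroup.comap (QuotientGroup.mk' N) (c.s i.succ)).subtype) (c.s i.succ)
      (fun x => x.2)) := by
    rintro ⟨y, hy⟩
    obtain ⟨g, hg⟩ := QuotientGroup.mk'_surjective N y
    exact ⟨⟨g, by rw [Subgroup.mem_comap, hg]; exact hy⟩, Subtype.ext hg⟩
  have hsub : ∀ (v : ↥(Subgroup.comap (QuotientGroup.mk' N) (c.s i.succ))),
      v ∈ (Subgroup.comap (QuotientGroup.mk' N) (c.s i.castSucc)).subgroupOf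
        (Subgroup.comap (QuotientGroup.mk' N) (c.s i.succ)) ↔
      ((MonoidHom.codRestrict ((QuotientGroup.mk' N).comp
        (Subgroup.comap (QuotientGroup.mk' N) (c.s i.succ)).subtype) (c.s i.succ)
        (fun x => x.2) v : ↥(c.s i.succ)) : G ⧸ N) ∈ c.s i.castSucc := fun v => by
      rw [Subgroup.mem_subgroupOf, Subgroup.mem_comap]; rfl
  obtain ⟨hnor, ⟨e⟩⟩ := quot_transfer (U := Subgroup.comap (QuotientGroup.mk' N) (c.s i.castSucc))
    (c.le_succ i) _ hsurj hsub
  show oddFactor (Subgroup.comap (QuotientGroup.mk' N) (c.s i.castSucc),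
    Subgroup.comap (QuotientGroup.mk' N) (c.s i.succ)) = _
  unfold oddFactor
  rw [Nat.card_congr e.toEquiv]

end TopSeries

end AProdJHL


open AProdJHL

/-- Imprimitive reduction step: let `G` act faithfully and transitively on a finite set
`Ω` of size `n = m · r`, with a nontrivial block system `B : Fin r → Set Ω` of blocks of
size `m` (`1 < m < n`) permuted by `G`.  Let `K 0` be the kernel of the action on the
blocks and `K (i+1) = {g ∈ K i : g acts trivially on B i}`.  If `a(H) ≤ 2^(k-1)` for
every group acting faithfully on a set of size `k < n`, then
`a(G) = a(G / K 0) · ∏ i, a(K i / K (i+1)) ≤ 2^(r-1) · (2^(m-1))^r ≤ 2^(n-1)`. -/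
theorem aProd_le_of_imprimitive
    {G : Type u} {Ω : Type v} [Group G] [MulAction G Ω] [FaithfulSMul G Ω] [Fintype Ω]
    [MulAction.IsPretransitive G Ω]
    {r m : ℕ} (hm : 1 < m) (hmn : m < Fintype.card Ω) (hn : Fintype.card Ω = m * r)
    (B : Fin r → Set Ω) (hcover : (⋃ i, B i) = Set.univ)
    (hdisj : Pairwise (Function.onFun Disjoint B))
    (hcard : ∀ i, Nat.card (B i) = m)
    (hblocks : ∀ (g : G) (i : Fin r), ∃ j, g • B i = B j)
    (K : Fin (r + 1) → Subgroup G)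
    (hK0 : ∀ g : G, g ∈ K 0 ↔ ∀ i, g • B i = B i)
    (hKsucc : ∀ (i : Fin r) (g : G),
      g ∈ K i.succ ↔ g ∈ K i.castSucc ∧ ∀ x ∈ B i, g • x = x)
    [hK0norm : (K 0).Normal]
    (hKle : ∀ i : Fin r, K i.succ ≤ K i.castSucc)
    (hKnorm : ∀ i : Fin r, ((K i.succ).subgroupOf (K i.castSucc)).Normal)
    (hind : ∀ (H : Type u) (X : Type v) [Group H] [Fintype X] [MulAction H X],
      FaithfulSMul H X → Fintype.card X < Fintype.card Ω →
      ∀ c : CompositionSeries' H, aProd c ≤ 2 ^ (Fintype.card X - 1))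
    (cG : CompositionSeries' G) (cQ : CompositionSeries' (G ⧸ K 0))
    (cK : ∀ i : Fin r,
      haveI := hKnorm i
      CompositionSeries' (↥(K i.castSucc) ⧸ (K i.succ).subgroupOf (K i.castSucc))) :
    (aProd cG = aProd cQ * ∏ i : Fin r, aProd (cK i)) ∧
      (aProd cG ≤ 2 ^ (r - 1) * (2 ^ (m - 1)) ^ r) ∧
      (2 ^ (r - 1) * (2 ^ (m - 1)) ^ r ≤ 2 ^ (Fintype.card Ω - 1)) := by
  classical
  -- basic numerology
  have hr0 : 0 < r := by
    rcases Nat.eq_zero_or_pos r with hr | hr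
    · subst hr; rw [Nat.mul_zero] at hn; omega
    · exact hr
  have hrn : r < Fintype.card Ω := by
    rw [hn]
    calc r = 1 * r := (one_mul r).symm
      _ < m * r := (Nat.mul_lt_mul_right hr0).mpr hm
  -- blocks are nonempty and distinct
  have hBne : ∀ i, (B i).Nonempty := by
    intro i
    rcases Set.eq_empty_or_nonempty (B i) with h | h
    · exfalso
      have := hcard i
      rw [h] at this
      simp at this
      omega
    · exact h
  have hBinj : Function.Injective B := by
    intro i j hij
    by_contra hne
    have hd := hdisj hne
    rw [Function.onFun, hij] at hd
    obtain ⟨x, hx⟩ := hBne j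
    exact Set.disjoint_left.mp hd hx hx
  -- the permutation action on blocks
  choose β hβ using hblocks
  have hβ_one : ∀ i, β 1 i = i := fun i => hBinj (by rw [← hβ, one_smul])
  have hβ_mul : ∀ g h i, β (g * h) i = β g (β h i) := fun g h i =>
    hBinj (by rw [← hβ, ← hβ, ← hβ, mul_smul])
  have hcancel : ∀ (g : G) (d : Fin r), β g⁻¹ (β g d) = d := fun g d => by
    rw [← hβ_mul, inv_mul_cancel, hβ_one]
  have hcancel' : ∀ (g : G) (d : Fin r), β g (β g⁻¹ d) = d := fun g d => by
    rw [← hβ_mul, mul_inv_cancel, hβ_one]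
  let σ : G →* Equiv.Perm (ULift.{v} (Fin r)) :=
  { toFun := fun g =>
      { toFun := fun x => ⟨β g x.down⟩
        invFun := fun x => ⟨β g⁻¹ x.down⟩
        left_inv := fun x => congrArg ULift.up (hcancel g x.down)
        right_inv := fun x => congrArg ULift.up (hcancel' g x.down) }
    map_one' := Equiv.ext fun x => congrArg ULift.up (hβ_one x.down)
    map_mul' := fun g h => Equiv.ext fun x => congrArg ULift.up (hβ_mul g h x.down) }
  have hσ_apply : ∀ (g : G) (x : ULift.{v} (Fin r)), σ g x = ⟨β g x.down⟩ := fun _ _ => rfl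
  have hσK : ∀ g, g ∈ K 0 ↔ σ g = 1 := by
    intro g
    rw [hK0]
    constructor
    · intro h
      exact Equiv.ext fun x => congrArg ULift.up (hBinj (by rw [← hβ, h]))
    · intro h i
      have : β g i = i := congrArg ULift.down (Equiv.ext_iff.mp h ⟨i⟩)
      rw [hβ g i, this]
  let τ : (G ⧸ K 0) →* Equiv.Perm (ULift.{v} (Fin r)) :=
    QuotientGroup.lift (K 0) σ (fun g hg => (hσK g).mp hg)
  have hτ_mk : ∀ g : G, τ (QuotientGroup.mk g) = σ g := fun g => rfl
  have hτinj : Function.Injective τ := by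
    rw [← MonoidHom.ker_eq_bot_iff, eq_bot_iff]
    intro q hq
    obtain ⟨g, rfl⟩ := QuotientGroup.mk_surjective q
    have hker : σ g = 1 := hq
    rw [Subgroup.mem_bot, QuotientGroup.eq_one_iff]
    exact (hσK g).mpr hker
  letI actQ : MulAction (G ⧸ K 0) (ULift.{v} (Fin r)) :=
  { smul := fun q x => τ q x
    one_smul := fun x => by show τ 1 x = x; rw [map_one]; rfl
    mul_smul := fun a b x => by show τ (a * b) x = τ a (τ b x); rw [map_mul]; rfl }
  have hfaithQ : FaithfulSMul (G ⧸ K 0) (ULift.{v} (Fin r)) := by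
    constructor
    intro q₁ q₂ h
    exact hτinj (Equiv.ext fun x => h x)
  have hQbound : aProd cQ ≤ 2 ^ (r - 1) := by
    have := hind (G ⧸ K 0) (ULift.{v} (Fin r)) hfaithQ (by simpa using hrn) cQ
    simpa using this
  -- chain facts
  have hK0' : ∀ j : Fin (r + 1), K j ≤ K 0 := by
    have key : ∀ j : ℕ, ∀ hj : j ≤ r, K ⟨j, by omega⟩ ≤ K 0 := by
      intro j
      induction j with
      | zero => intro _; exact le_of_eq (congrArg K (Fin.ext rfl))
      | succ j ih =>
        intro hj
        have h1 : K (⟨j + 1, by omega⟩ : Fin (r + 1)) = K (Fin.succ ⟨j, by omega⟩) :=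
          congrArg K (Fin.ext rfl)
        have h2 : K (Fin.castSucc ⟨j, by omega⟩) = K (⟨j, by omega⟩ : Fin (r + 1)) :=
          congrArg K (Fin.ext rfl)
        rw [h1]
        exact le_trans (hKle ⟨j, by omega⟩) (le_trans (le_of_eq h2) (ih (by omega)))
    intro j
    have : K j = K ⟨(j : ℕ), by omega⟩ := congrArg K (Fin.ext rfl)
    rw [this]
    exact key (j : ℕ) (by omega)
  have hfix_all : ∀ j : ℕ, ∀ hj : j ≤ r, ∀ g, g ∈ K ⟨j, by omega⟩ →
      ∀ i : Fin r, (i : ℕ) < j → ∀ x ∈ B i, g • x = x := by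
    intro j
    induction j with
    | zero => intro _ g _ i hi; omega
    | succ j ih =>
      intro hj g hg i hi x hx
      have hsucc : K (⟨j + 1, by omega⟩ : Fin (r + 1)) = K (Fin.succ ⟨j, by omega⟩) :=
        congrArg K (Fin.ext rfl)
      rw [hsucc] at hg
      obtain ⟨hg0, hfix⟩ := (hKsucc ⟨j, by omega⟩ g).mp hg
      by_cases hcase : (i : ℕ) = j
      · have hBi : B i = B ⟨j, by omega⟩ := congrArg B (Fin.ext hcase)
        exact hfix x (hBi ▸ hx)
      · have hg0' : g ∈ K ⟨j, by omega⟩ := by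
          have : K (Fin.castSucc ⟨j, by omega⟩) = K (⟨j, by omega⟩ : Fin (r + 1)) :=
            congrArg K (Fin.ext rfl)
          rwa [this] at hg0
        exact ih (by omega) g hg0' i (by omega) x hx
  have hKlast : K ⟨r, Nat.lt_succ_self r⟩ = ⊥ := by
    rw [eq_bot_iff]
    intro g hg
    rw [Subgroup.mem_bot]
    apply FaithfulSMul.eq_of_smul_eq_smul (α := Ω)
    intro x
    have hx : x ∈ ⋃ i, B i := by rw [hcover]; trivial
    obtain ⟨i, hi⟩ := Set.mem_iUnion.mp hx
    rw [one_smul]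
    exact hfix_all r le_rfl g hg i i.isLt x hi
  -- the per-block actions and bounds
  have hKbound : ∀ i : Fin r, aProd (cK i) ≤ 2 ^ (m - 1) := by
    intro i
    haveI := hKnorm i
    haveI : Finite ↥(B i) := Set.toFinite (B i)
    letI : Fintype ↥(B i) := Fintype.ofFinite _
    have hfixK : ∀ g : G, g ∈ K i.castSucc → g • B i = B i := fun g hg =>
      (hK0 g).mp (hK0' i.castSucc hg) i
    have hmem : ∀ (k : ↥(K i.castSucc)) (x : Ω), x ∈ B i → (k : G) • x ∈ B i := by
      intro k x hx
      have := hfixK k k.2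
      rw [← this]
      exact Set.smul_mem_smul_set hx
    let ρ : ↥(K i.castSucc) →* Equiv.Perm ↥(B i) :=
    { toFun := fun k =>
        { toFun := fun x => ⟨(k : G) • (x : Ω), hmem k x x.2⟩
          invFun := fun x => ⟨(k : G)⁻¹ • (x : Ω), by
            have := hmem k⁻¹ x x.2
            simpa using this⟩
          left_inv := fun x => Subtype.ext (by simp)
          right_inv := fun x => Subtype.ext (by simp) }
      map_one' := Equiv.ext fun x => Subtype.ext (by simp)
      map_mul' := fun a b => Equiv.ext fun x => Subtype.ext (by
        show ((a * b : ↥(K i.castSucc)) : G) • (x : Ω) = (a : G) • ((b : G) • (x : Ω))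
        rw [Subgroup.coe_mul, mul_smul]) }
    have hρ_one : ∀ k : ↥(K i.castSucc), (∀ x ∈ B i, (k : G) • x = x) ↔ ρ k = 1 := by
      intro k
      constructor
      · intro h
        exact Equiv.ext fun x => Subtype.ext (h x x.2)
      · intro h x hx
        have := Equiv.ext_iff.mp h ⟨x, hx⟩
        exact congrArg Subtype.val this
    let τi : (↥(K i.castSucc) ⧸ (K i.succ).subgroupOf (K i.castSucc)) →* Equiv.Perm ↥(B i) :=
      QuotientGroup.lift _ ρ (fun k hk => (hρ_one k).mp
        (((hKsucc i (k : G)).mp (Subgroup.mem_subgroupOf.mp hk)).2))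
    have hτiinj : Function.Injective τi := by
      rw [← MonoidHom.ker_eq_bot_iff, eq_bot_iff]
      intro q hq
      obtain ⟨k, rfl⟩ := QuotientGroup.mk_surjective q
      have hker : ρ k = 1 := hq
      rw [Subgroup.mem_bot, QuotientGroup.eq_one_iff, Subgroup.mem_subgroupOf]
      exact (hKsucc i (k : G)).mpr ⟨k.2, (hρ_one k).mpr hker⟩
    letI actK : MulAction (↥(K i.castSucc) ⧸ (K i.succ).subgroupOf (K i.castSucc)) ↥(B i) :=
    { smul := fun q x => τi q x
      one_smul := fun x => by show τi 1 x = x; rw [map_one]; rfl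
      mul_smul := fun a b x => by show τi (a * b) x = τi a (τi b x); rw [map_mul]; rfl }
    have hfaithK : FaithfulSMul (↥(K i.castSucc) ⧸ (K i.succ).subgroupOf (K i.castSucc)) ↥(B i) := by
      constructor
      intro q₁ q₂ h
      exact hτiinj (Equiv.ext fun x => h x)
    have hcardB : Fintype.card ↥(B i) = m := by
      rw [← Nat.card_eq_fintype_card]
      exact hcard i
    have := hind _ ↥(B i) hfaithK (by rw [hcardB]; exact lt_of_le_of_lt (le_refl m) hmn) (cK i)
    rwa [hcardB] at this
  -- assemble the composition series of G
  have main : ∀ j : ℕ, ∀ hj : j ≤ r, ∃ c : CompositionSeries (Subgroup G),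
      c.head = ⊥ ∧ c.last = K ⟨r - j, by omega⟩ ∧
      aProdCS c = ∏ i ∈ Finset.univ.filter (fun i : Fin r => r - j ≤ (i : ℕ)), aProd (cK i) := by
    intro j
    induction j with
    | zero =>
      intro _
      refine ⟨RelSeries.singleton _ ⊥, rfl, ?_, ?_⟩
      · show (⊥ : Subgroup G) = K ⟨r - 0, _⟩
        rw [show (⟨r - 0, by omega⟩ : Fin (r + 1)) = ⟨r, Nat.lt_succ_self r⟩ from Fin.ext (by simp),
          hKlast]
      · show (1 : ℕ) = _
        rw [Finset.filter_false_of_mem, Finset.prod_empty]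
        intro i _
        have := i.isLt
        omega
    | succ j ih =>
      intro hj
      obtain ⟨c, hh, hl, hp⟩ := ih (by omega)
      set i0 : Fin r := ⟨r - (j + 1), by omega⟩ with hi0
      haveI := hKnorm i0
      have hconn : c.last = K i0.succ := by
        rw [hl]
        exact congrArg K (Fin.ext (by show r - j = (r - (j+1)) + 1; omega))
      have hconn' : c.last = (segSeries (K i0.castSucc) (K i0.succ) (cK i0)).head := by
        rw [hconn, segSeries_head _ _ (hKle i0)]
      refine ⟨RelSeries.smash c (segSeries (K i0.castSucc) (K i0.succ) (cK i0)) hconn', ?_, ?_, ?_⟩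
      · rw [RelSeries.head_smash]; exact hh
      · rw [RelSeries.last_smash, segSeries_last]
        exact congrArg K (Fin.ext (by simp [hi0]))
      · rw [aProdCS_smash, hp, aProdCS_segSeries]
        have hins : Finset.univ.filter (fun i : Fin r => r - (j + 1) ≤ (i : ℕ))
            = insert i0 (Finset.univ.filter (fun i : Fin r => r - j ≤ (i : ℕ))) := by
          ext i
          have := i.isLt
          simp only [Finset.mem_filter, Finset.mem_univ, true_and, Finset.mem_insert,
            Fin.ext_iff, hi0]
          omega
        rw [hins, Finset.prod_insert (by simp [hi0]; omega)]
        exact mul_comm _ _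
  obtain ⟨c, hh, hl, hp⟩ := main r le_rfl
  have hl' : c.last = K 0 := by
    rw [hl]
    exact congrArg K (Fin.ext (by simp))
  have hconn : c.last = (topSeries (K 0) cQ).head := by rw [hl', topSeries_head]
  have hfull_head : (RelSeries.smash c (topSeries (K 0) cQ) hconn).head = ⊥ := by
    rw [RelSeries.head_smash]; exact hh
  have hfull_last : (RelSeries.smash c (topSeries (K 0) cQ) hconn).last = ⊤ := by
    rw [RelSeries.last_smash]; exact topSeries_last _ _
  have heqv : (toCS cG).Equivalent (RelSeries.smash c (topSeries (K 0) cQ) hconn) :=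
    CompositionSeries.jordan_holder _ _
      (by rw [toCS_head, cG.bot_eq, hfull_head]) (by rw [toCS_last, cG.top_eq, hfull_last])
  have h1 : aProd cG = aProd cQ * ∏ i : Fin r, aProd (cK i) := by
    rw [aProd_eq_toCS, aProdCS_eq_of_equivalent heqv, aProdCS_smash, hp, aProdCS_topSeries]
    rw [show Finset.univ.filter (fun i : Fin r => r - r ≤ (i : ℕ)) = Finset.univ from by simp]
    exact mul_comm _ _
  have h3 : 2 ^ (r - 1) * (2 ^ (m - 1)) ^ r ≤ 2 ^ (Fintype.card Ω - 1) := by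
    rw [hn, ← pow_mul, ← pow_add]
    apply Nat.pow_le_pow_right (by norm_num)
    have h2r : r ≤ m * r := Nat.le_mul_of_pos_left r (by omega)
    have hsm : (m - 1) * r = m * r - r := by rw [Nat.sub_mul, one_mul]
    omega
  refine ⟨h1, ?_, h3⟩
  rw [h1]
  have hprod : (∏ i : Fin r, aProd (cK i)) ≤ (2 ^ (m - 1)) ^ r := by
    calc (∏ i : Fin r, aProd (cK i)) ≤ ∏ _i : Fin r, 2 ^ (m - 1) :=
          Finset.prod_le_prod' (fun i _ => hKbound i)
      _ = (2 ^ (m - 1)) ^ r := by rw [Finset.prod_const, Finset.card_univ, Fintype.card_fin]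
  exact Nat.mul_le_mul hQbound hprod
end
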